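/- Greedy optimality for separable min-max objectives: let φ({r_i}) = max_i g_i(r_i) where each g_i : βℕ → ℝ is strictly increasing with g_i(0) = c₀ for a common constant c₀. Then the greedy algorithm, which starts from the all-zero allocation and at each step adds β to the coordinate j minimizing g_j(r_j + β), produces after k steps an allocation minimizing φ over all allocations in (βℕ)^n with total sum kβ. -/

import Mathlib

/-- Greedy optimality for separable min-max objectives: with `g_i` strictly
increasing on `βℕ` (indexed here by the number of `β`-increments) and equal at `0`,
the greedy algorithm minimizes `max_i g_i(r_i)` after every step. -/
theorem stmt_10 (n : ℕ) (hn : 0 < n) (g : Fin n → ℕ → ℝ) (c0 : ℝ)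
    (hmono : ∀ i, StrictMono (g i)) (h0 : ∀ i, g i 0 = c0)
    (a : ℕ → Fin n → ℕ) (ha0 : a 0 = 0)
    (hstep : ∀ k, ∃ j,
      (∀ i, g j (a k j + 1) ≤ g i (a k i + 1)) ∧
      a (k + 1) j = a k j + 1 ∧ ∀ i, i ≠ j → a (k + 1) i = a k i) :
    ∀ k : ℕ, IsLeast
      {v : ℝ | ∃ r : Fin n → ℕ, (∑ i, r i) = k ∧
        v = Finset.univ.sup' ⟨⟨0, hn⟩, Finset.mem_univ _⟩ (fun i => g i (r i))}
      (Finset.univ.sup' ⟨⟨0, hn⟩, Finset.mem_univ _⟩ (fun i => g i (a k i))) := by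
  have hmono' : ∀ i, Monotone (g i) := fun i => (hmono i).monotone
  have hsum : ∀ k, (∑ i, a k i) = k := by
    intro k
    induction k with
    | zero => simp [ha0]
    | succ k ih =>
      obtain ⟨j, hj, hja, hji⟩ := hstep k
      have hdec : ∀ i, a (k+1) i = a k i + (if i = j then 1 else 0) := by
        intro i
        by_cases h : i = j
        · subst h; simp [hja]
        · simp [h, hji i h]
      rw [Finset.sum_congr rfl (fun i _ => hdec i), Finset.sum_add_distrib, ih]
      simp
  intro k
  constructor
  · exact ⟨a k, hsum k, rfl⟩
  · induction k with
    | zero =>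
      rintro v ⟨r, hr, rfl⟩
      have hr0 : ∀ i ∈ Finset.univ, r i = 0 :=
        (Finset.sum_eq_zero_iff).mp hr
      have e1 : (fun i => g i (a 0 i)) = fun _ => c0 := by
        funext i; rw [ha0]; simpa using h0 i
      have e2 : (fun i => g i (r i)) = fun _ => c0 := by
        funext i; rw [hr0 i (Finset.mem_univ i), h0 i]
      rw [e1, e2]
    | succ k ih =>
      rintro v ⟨r, hr, rfl⟩
      obtain ⟨j, hj, hja, hji⟩ := hstep k
      -- find a coordinate where r is positive
      obtain ⟨i0, -, hi0⟩ := Finset.exists_ne_zero_of_sum_ne_zero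
        (by rw [hr]; exact Nat.succ_ne_zero k)
      obtain ⟨m, hm⟩ : ∃ m, r i0 = m + 1 := ⟨r i0 - 1, by omega⟩
      set r' : Fin n → ℕ := Function.update r i0 m with hr'
      have hsum' : (∑ i, r' i) = k := by
        have h1 : (∑ i, r' i) = m + ∑ i ∈ Finset.univ.erase i0, r i := by
          rw [hr', Finset.sum_update_of_mem (Finset.mem_univ i0)]
          congr 1
          exact Finset.sum_congr (by simp [Finset.sdiff_singleton_eq_erase]) (fun _ _ => rfl)
        have h2 : (∑ i, r i) = r i0 + ∑ i ∈ Finset.univ.erase i0, r i :=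
          (Finset.add_sum_erase _ _ (Finset.mem_univ i0)).symm
        omega
      have hle' : ∀ i, r' i ≤ r i := by
        intro i
        by_cases h : i = i0
        · subst h; simp [hr', hm]
        · simp [hr', Function.update_of_ne h]
      have hsupr' : Finset.univ.sup' ⟨⟨0, hn⟩, Finset.mem_univ _⟩ (fun i => g i (r' i))
          ≤ Finset.univ.sup' ⟨⟨0, hn⟩, Finset.mem_univ _⟩ (fun i => g i (r i)) := by
        apply Finset.sup'_le
        intro i _
        exact le_trans (hmono' i (hle' i)) (Finset.le_sup' (fun i => g i (r i)) (Finset.mem_univ i))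
      have hIH : Finset.univ.sup' ⟨⟨0, hn⟩, Finset.mem_univ _⟩ (fun i => g i (a k i))
          ≤ Finset.univ.sup' ⟨⟨0, hn⟩, Finset.mem_univ _⟩ (fun i => g i (r i)) :=
        le_trans (ih ⟨r', hsum', rfl⟩) hsupr'
      -- pigeonhole: some coordinate of r exceeds a k
      obtain ⟨i1, -, hi1⟩ := Finset.exists_lt_of_sum_lt
        (show (∑ i, a k i) < ∑ i, r i by rw [hsum k, hr]; omega)
      apply Finset.sup'_le
      intro i _
      by_cases hij : i = j
      · subst hij
        rw [hja]
        calc g i (a k i + 1) ≤ g i1 (a k i1 + 1) := hj i1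
          _ ≤ g i1 (r i1) := hmono' i1 (by omega)
          _ ≤ _ := Finset.le_sup' (fun i => g i (r i)) (Finset.mem_univ i1)
      · rw [hji i hij]
        exact le_trans (Finset.le_sup' (fun i => g i (a k i)) (Finset.mem_univ i)) hIH
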